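/- Let Q_A be a real n×k matrix and Q_B a real n×p matrix with orthonormal columns and p ≤ k. Then L₁ := p − ‖Q_Bᵀ Q_A‖_F² satisfies L₁ ≥ 0, and L₁ = 0 if and only if the column space of Q_B is contained in the column space of Q_A. -/
import Mathlib


open Matrix

/-- For `Q_A` n×k and `Q_B` n×p with orthonormal columns and `p ≤ k`, the loss
`L₁ = p − ‖Q_Bᵀ Q_A‖_F²` is nonnegative, and it vanishes iff the column space of
`Q_B` is contained in the column space of `Q_A`. -/
theorem loss_nonneg_and_zero_iff_subspace {n k p : ℕ}
    (QA : Matrix (Fin n) (Fin k) ℝ) (QB : Matrix (Fin n) (Fin p) ℝ)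
    (hA : QAᵀ * QA = 1) (hB : QBᵀ * QB = 1) (hpk : p ≤ k) :
    0 ≤ (p : ℝ) - Matrix.trace ((QBᵀ * QA)ᵀ * (QBᵀ * QA)) ∧
    ((p : ℝ) - Matrix.trace ((QBᵀ * QA)ᵀ * (QBᵀ * QA)) = 0 ↔
      LinearMap.range QB.mulVecLin ≤ LinearMap.range QA.mulVecLin) := by
  set C : Matrix (Fin n) (Fin p) ℝ := QB - QA * (QAᵀ * QB) with hC
  have hA' : ∀ (m : ℕ) (X : Matrix (Fin k) (Fin m) ℝ), QAᵀ * (QA * X) = X := by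
    intro m X; rw [← Matrix.mul_assoc, hA, Matrix.one_mul]
  have key : Cᵀ * C = 1 - QBᵀ * (QA * (QAᵀ * QB)) := by
    rw [hC]
    simp only [Matrix.transpose_sub, Matrix.transpose_mul, Matrix.transpose_transpose,
      Matrix.sub_mul, Matrix.mul_sub, Matrix.mul_assoc, hA', hB]
    abel
  have htr : (p : ℝ) - Matrix.trace ((QBᵀ * QA)ᵀ * (QBᵀ * QA)) = Matrix.trace (Cᵀ * C) := by
    rw [key, Matrix.trace_sub, Matrix.trace_one, Matrix.transpose_mul, Matrix.transpose_transpose,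
      Matrix.trace_mul_comm, Matrix.mul_assoc]
    simp
  have htr2 : Matrix.trace (Cᵀ * C) = ∑ j, ∑ i, C i j * C i j := by
    simp [Matrix.trace, Matrix.mul_apply, Matrix.diag]
  have hnonneg : 0 ≤ Matrix.trace (Cᵀ * C) := by
    rw [htr2]
    exact Finset.sum_nonneg fun j _ => Finset.sum_nonneg fun i _ => mul_self_nonneg _
  refine ⟨htr ▸ hnonneg, ?_⟩
  rw [htr]
  constructor
  · intro h
    have hC0 : C = 0 := by
      rw [htr2] at h
      ext i j
      have h1 := (Finset.sum_eq_zero_iff_of_nonneg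
        (fun j _ => Finset.sum_nonneg fun i _ => mul_self_nonneg (C i j))).mp h j
        (Finset.mem_univ j)
      have h2 := (Finset.sum_eq_zero_iff_of_nonneg
        (fun i _ => mul_self_nonneg (C i j))).mp h1 i (Finset.mem_univ i)
      simpa [mul_self_eq_zero] using h2
    have hQB : QB = QA * (QAᵀ * QB) := by
      have := sub_eq_zero.mp hC0
      exact this
    rintro x ⟨v, rfl⟩
    refine ⟨(QAᵀ * QB).mulVecLin v, ?_⟩
    simp only [Matrix.mulVecLin_apply, Matrix.mulVec_mulVec]
    rw [← hQB]
  · intro h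
    have hC0 : C = 0 := by
      have hmv : ∀ v : Fin p → ℝ, C.mulVec v = 0 := by
        intro v
        obtain ⟨w, hw⟩ := h ⟨v, rfl⟩
        simp only [Matrix.mulVecLin_apply] at hw
        rw [hC, Matrix.sub_mulVec, ← hw]
        have hcalc : (QA * (QAᵀ * QB)) *ᵥ v = QA *ᵥ w := by
          calc (QA * (QAᵀ * QB)) *ᵥ v = QA *ᵥ (QAᵀ *ᵥ (QB *ᵥ v)) := by
                rw [Matrix.mulVec_mulVec, Matrix.mulVec_mulVec, Matrix.mul_assoc]
            _ = QA *ᵥ ((QAᵀ * QA) *ᵥ w) := by rw [← hw]; simp [Matrix.mulVec_mulVec, Matrix.mul_assoc]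
            _ = QA *ᵥ w := by rw [hA, Matrix.one_mulVec]
        rw [hcalc, sub_self]
      ext i j
      have := congr_fun (hmv (Pi.single j 1)) i
      simpa [Matrix.mulVec_single] using this
    rw [hC0]
    simp
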